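/- Fix N ≥ 1 and d ∈ ℕ^{N+1}. In the formal power series ring ℚ[[q]] one has the identity P_d = Σ_{m ∈ M^+_d} q^{c(m)} · P_m, where the sum runs over the finite set of all Kostant partitions of d, P_d = Π_{i=0}^N P_{d_i} and P_m = Π_{0 ≤ i ≤ j ≤ N} P_{m_{ij}}. -/

import Mathlib

/-- `m` is a Kostant partition of the dimension vector `d` for the equioriented
type-A quiver with vertices `0, …, N`: `m` is supported on the triangle
`i ≤ j ≤ N` and `d_k = Σ_{i ≤ k ≤ j} m_{ij}` for every `k ≤ N`. -/
def IsKostant (N : ℕ) (d : ℕ → ℕ) (m : ℕ → ℕ → ℕ) : Prop :=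
  (∀ i j : ℕ, ¬(i ≤ j ∧ j ≤ N) → m i j = 0) ∧
  ∀ k ≤ N, d k = ∑ i ∈ Finset.range (k + 1), ∑ j ∈ Finset.Icc k N, m i j

/-- `c(m) = Σ_{1 ≤ i ≤ u ≤ j ≤ v ≤ N} m_{i−1,j−1} · m_{u,v}`, the codimension of the
orbit corresponding to the Kostant partition `m`. -/
def kpCodim (N : ℕ) (m : ℕ → ℕ → ℕ) : ℕ :=
  ∑ i ∈ Finset.Icc 1 N, ∑ u ∈ Finset.Icc i N, ∑ j ∈ Finset.Icc u N,
    ∑ v ∈ Finset.Icc j N, m (i - 1) (j - 1) * m u v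

/-- `P_s = Π_{t=1}^s (1 − q^t)⁻¹ ∈ ℚ⟦q⟧`, the inverse `q`-Pochhammer symbol. -/
noncomputable def Pq (s : ℕ) : PowerSeries ℚ :=
  ∏ t ∈ Finset.Icc 1 s, (1 - (PowerSeries.X : PowerSeries ℚ) ^ t)⁻¹

/-- `P_m = Π_{0 ≤ i ≤ j ≤ N} P_{m_{ij}}` for a Kostant partition `m`. -/
noncomputable def PqKP (N : ℕ) (m : ℕ → ℕ → ℕ) : PowerSeries ℚ :=
  ∏ i ∈ Finset.range (N + 1), ∏ j ∈ Finset.Icc i N, Pq (m i j)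

namespace KPAux
open Finset PowerSeries

lemma one_sub_mul_inv (t : ℕ) (ht : 1 ≤ t) :
    (1 - (X : PowerSeries ℚ) ^ t) * (1 - (X : PowerSeries ℚ) ^ t)⁻¹ = 1 := by
  apply PowerSeries.mul_inv_cancel
  simp [map_sub, map_pow, constantCoeff_X, zero_pow (by omega : t ≠ 0)]

lemma Pq_zero : Pq 0 = 1 := by simp [Pq]

lemma Pq_succ (s : ℕ) : Pq (s + 1) = Pq s * (1 - (X : PowerSeries ℚ) ^ (s + 1))⁻¹ := by
  rw [Pq, Pq, Finset.prod_Icc_succ_top (by omega)]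

lemma one_sub_mul_Pq (s : ℕ) :
    (1 - (X : PowerSeries ℚ) ^ (s + 1)) * Pq (s + 1) = Pq s := by
  rw [Pq_succ, ← mul_assoc, mul_comm (1 - (X : PowerSeries ℚ) ^ (s + 1)),
    mul_assoc, one_sub_mul_inv (s + 1) (by omega), mul_one]

/-- rank-1 sum -/
noncomputable def F (a b : ℕ) : PowerSeries ℚ :=
  ∑ c ∈ range (min a b + 1),
    (X : PowerSeries ℚ) ^ ((a - c) * (b - c)) * (Pq (a - c) * (Pq c * Pq (b - c)))

lemma F_symm (a b : ℕ) : F a b = F b a := by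
  unfold F
  rw [min_comm]
  refine Finset.sum_congr rfl fun c _ => ?_
  rw [Nat.mul_comm (a - c) (b - c)]
  ring

lemma F_zero (a : ℕ) : F a 0 = Pq a := by
  simp [F, Pq_zero]

lemma F_rec (a b : ℕ) (h : b + 1 ≤ a) :
    (1 - (X : PowerSeries ℚ) ^ (b + 1)) * F a (b + 1) = F a b := by
  have hmin1 : min a (b + 1) = b + 1 := by omega
  have hmin0 : min a b = b := by omega
  rw [F, F, hmin1, hmin0, Finset.mul_sum]
  -- termwise split
  have split : ∀ c ∈ range (b + 1 + 1),
      (1 - (X : PowerSeries ℚ) ^ (b + 1)) *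
        ((X : PowerSeries ℚ) ^ ((a - c) * (b + 1 - c)) * (Pq (a - c) * (Pq c * Pq (b + 1 - c)))) =
      ((X : PowerSeries ℚ) ^ ((a - c) * (b + 1 - c)) *
        (Pq (a - c) * (Pq c * ((1 - (X : PowerSeries ℚ) ^ (b + 1 - c)) * Pq (b + 1 - c))))) +
      ((X : PowerSeries ℚ) ^ ((a - c) * (b + 1 - c) + (b + 1 - c)) *
        (Pq (a - c) * (((1 - (X : PowerSeries ℚ) ^ c) * Pq c) * Pq (b + 1 - c)))) := by
    intro c hc
    simp only [mem_range] at hc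
    have hx : (X : PowerSeries ℚ) ^ (b + 1 - c) * (X : PowerSeries ℚ) ^ c
        = (X : PowerSeries ℚ) ^ (b + 1) := by
      rw [← pow_add]; congr 1; omega
    linear_combination ((X : PowerSeries ℚ) ^ ((a - c) * (b + 1 - c)) * Pq (a - c) * Pq c *
      Pq (b + 1 - c)) * hx
  rw [Finset.sum_congr rfl split, Finset.sum_add_distrib,
    Finset.sum_range_succ (fun c => (X : PowerSeries ℚ) ^ ((a - c) * (b + 1 - c)) *
      (Pq (a - c) * (Pq c * ((1 - (X : PowerSeries ℚ) ^ (b + 1 - c)) * Pq (b + 1 - c))))) (b + 1),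
    Finset.sum_range_succ' (fun c => (X : PowerSeries ℚ) ^ ((a - c) * (b + 1 - c) + (b + 1 - c)) *
      (Pq (a - c) * ((1 - (X : PowerSeries ℚ) ^ c) * Pq c * Pq (b + 1 - c)))) (b + 1)]
  simp only [Nat.sub_self, pow_zero, sub_self, zero_mul, mul_zero, add_zero, Nat.sub_zero]
  rw [← Finset.sum_add_distrib]
  refine Finset.sum_congr rfl fun c hc => ?_
  simp only [Finset.mem_range] at hc
  have h1 : b + 1 - c = (b - c) + 1 := by omega
  have h6 : b + 1 - (c + 1) = b - c := by omega
  have hac : a - (c + 1) + 1 = a - c := by omega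
  rw [h1, h6, one_sub_mul_Pq (b - c), one_sub_mul_Pq c, ← hac]
  have h4 := one_sub_mul_Pq (a - (c + 1))
  linear_combination (-(X : PowerSeries ℚ) ^ ((a - (c + 1)) * (b - c) + (b - c)) * Pq c *
    Pq (b - c)) * h4

end KPAux

namespace KPAux
open Finset PowerSeries

lemma F_eq_of_le (a : ℕ) : ∀ b, b ≤ a → F a b = Pq a * Pq b := by
  intro b
  induction b with
  | zero => intro _; rw [F_zero, Pq_zero, mul_one]
  | succ b ih =>
    intro hb
    have h1 := F_rec a b (by omega)
    rw [ih (by omega)] at h1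
    have h2 := one_sub_mul_inv (b + 1) (by omega)
    calc F a (b + 1) = ((1 - (X : PowerSeries ℚ) ^ (b + 1))⁻¹ *
          (1 - (X : PowerSeries ℚ) ^ (b + 1))) * F a (b + 1) := by
          rw [mul_comm ((1 - (X : PowerSeries ℚ) ^ (b + 1))⁻¹), h2, one_mul]
      _ = (1 - (X : PowerSeries ℚ) ^ (b + 1))⁻¹ * (Pq a * Pq b) := by
          rw [mul_assoc, h1]
      _ = Pq a * Pq (b + 1) := by rw [Pq_succ]; ring

lemma F_eq (a b : ℕ) : F a b = Pq a * Pq b := by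
  rcases le_total b a with h | h
  · exact F_eq_of_le a b h
  · rw [F_symm, F_eq_of_le b a h, mul_comm]

noncomputable def G : ℕ → (ℕ → ℕ) → ℕ → PowerSeries ℚ
  | 0, _, b => Pq b
  | (k + 1), a, b => ∑ c ∈ range (min (a k) b + 1),
      (X : PowerSeries ℚ) ^ ((b - c) * (a k - c)) * (Pq (b - c) * (Pq (a k - c) * G k a c))

lemma G_eq (k : ℕ) (a : ℕ → ℕ) (b : ℕ) : G k a b = Pq b * ∏ i ∈ range k, Pq (a i) := by
  induction k generalizing b with
  | zero => simp [G]
  | succ k ih =>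
    rw [G, Finset.prod_range_succ]
    have : ∀ c ∈ range (min (a k) b + 1),
        (X : PowerSeries ℚ) ^ ((b - c) * (a k - c)) * (Pq (b - c) * (Pq (a k - c) * G k a c)) =
        ((X : PowerSeries ℚ) ^ ((a k - c) * (b - c)) * (Pq (a k - c) * (Pq c * Pq (b - c)))) *
          ∏ i ∈ range k, Pq (a i) := by
      intro c _
      rw [ih c, Nat.mul_comm (b - c) (a k - c)]
      ring
    rw [Finset.sum_congr rfl this, ← Finset.sum_mul]
    have : ∑ c ∈ range (min (a k) b + 1),
        (X : PowerSeries ℚ) ^ ((a k - c) * (b - c)) * (Pq (a k - c) * (Pq c * Pq (b - c))) =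
        F (a k) b := rfl
    rw [this, F_eq]
    ring

end KPAux

namespace KPAux
open Finset PowerSeries

/-- partial sums -/
def PS (r : ℕ → ℕ) (j : ℕ) : ℕ := ∑ i ∈ range (j + 1), r i

/-- exponent -/
def E (k : ℕ) (a : ℕ → ℕ) (r : ℕ → ℕ) : ℕ :=
  ∑ u ∈ Icc 1 k, r u * (a (u - 1) - PS r (u - 1))

def Rset (k : ℕ) (a : ℕ → ℕ) (b : ℕ) : Set (ℕ → ℕ) :=
  {r | (∀ i, k < i → r i = 0) ∧ PS r k = b ∧ ∀ j, j < k → PS r j ≤ a j}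

lemma r_le_of_mem {k : ℕ} {a : ℕ → ℕ} {b : ℕ} {r : ℕ → ℕ} (hr : r ∈ Rset k a b)
    (i : ℕ) : r i ≤ b := by
  obtain ⟨h0, h1, _⟩ := hr
  rcases le_or_gt i k with hik | hik
  · rw [← h1]
    exact Finset.single_le_sum (f := r) (fun j _ => Nat.zero_le _)
      (Finset.mem_range.2 (by omega))
  · rw [h0 i hik]; exact Nat.zero_le _

lemma Rfin (k : ℕ) (a : ℕ → ℕ) (b : ℕ) : (Rset k a b).Finite := by
  have : Set.Finite ((fun (r : ℕ → ℕ) (i : Fin (k + 1)) => (⟨min (r i) b, by omega⟩ : Fin (b + 1)))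
      '' Rset k a b) := Set.toFinite _
  refine Set.Finite.of_finite_image this ?_
  intro r hr r' hr' h
  funext i
  rcases le_or_gt i k with hik | hik
  · have := congrFun h ⟨i, by omega⟩
    have h1 : min (r i) b = min (r' i) b := congrArg Fin.val this
    rw [min_eq_left (r_le_of_mem hr i), min_eq_left (r_le_of_mem hr' i)] at h1
    exact h1
  · rw [hr.1 i hik, hr'.1 i hik]

noncomputable def Rfs (k : ℕ) (a : ℕ → ℕ) (b : ℕ) : Finset (ℕ → ℕ) := (Rfin k a b).toFinset

lemma mem_Rfs {k : ℕ} {a : ℕ → ℕ} {b : ℕ} {r : ℕ → ℕ} :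
    r ∈ Rfs k a b ↔ (∀ i, k < i → r i = 0) ∧ PS r k = b ∧ ∀ j, j < k → PS r j ≤ a j :=
  (Rfin k a b).mem_toFinset

end KPAux

namespace KPAux
open Finset PowerSeries

lemma PS_succ (r : ℕ → ℕ) (k : ℕ) : PS r (k + 1) = PS r k + r (k + 1) :=
  Finset.sum_range_succ r (k + 1)

lemma PS_if {r : ℕ → ℕ} {v : ℕ} {j k : ℕ} (h : j ≤ k) :
    PS (fun i => if i = k + 1 then v else r i) j = PS r j := by
  refine Finset.sum_congr rfl fun i hi => ?_
  simp only [Finset.mem_range] at hi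
  dsimp only
  rw [if_neg (by omega)]

lemma main2 (k : ℕ) (a : ℕ → ℕ) (b : ℕ) :
    ∑ r ∈ Rfs k a b, (X : PowerSeries ℚ) ^ (E k a r) *
      ((∏ i ∈ range (k + 1), Pq (r i)) * ∏ j ∈ range k, Pq (a j - PS r j)) = G k a b := by
  induction k generalizing b with
  | zero =>
    have hsingle : Rfs 0 a b = {fun i => if i = 0 then b else 0} := by
      ext r
      rw [mem_Rfs, Finset.mem_singleton]
      constructor
      · rintro ⟨h0, h1, -⟩
        funext i
        rcases Nat.eq_zero_or_pos i with hi | hi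
        · subst hi; rw [if_pos rfl, ← h1, PS, Finset.sum_range_one]
        · rw [if_neg (by omega), h0 i hi]
      · rintro rfl
        refine ⟨fun i hi => by dsimp only; rw [if_neg (by omega)], ?_, fun j hj => by omega⟩
        rw [PS, Finset.sum_range_one, if_pos rfl]
    rw [hsingle, Finset.sum_singleton]
    simp [E, G, PS, Pq_zero]
  | succ k ih =>
    rw [G]
    have hG : ∀ c ∈ range (min (a k) b + 1),
        (X : PowerSeries ℚ) ^ ((b - c) * (a k - c)) * (Pq (b - c) * (Pq (a k - c) * G k a c)) =
        ∑ r' ∈ Rfs k a c, (X : PowerSeries ℚ) ^ ((b - c) * (a k - c)) *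
          (Pq (b - c) * (Pq (a k - c) * ((X : PowerSeries ℚ) ^ (E k a r') *
            ((∏ i ∈ range (k + 1), Pq (r' i)) * ∏ j ∈ range k, Pq (a j - PS r' j))))) := by
      intro c _
      rw [← ih c]
      simp only [Finset.mul_sum]
    rw [Finset.sum_congr rfl hG, Finset.sum_sigma']
    refine Finset.sum_nbij'
      (i := fun r => (⟨PS r k, fun i => if i = k + 1 then 0 else r i⟩ : (_ : ℕ) × (ℕ → ℕ)))
      (j := fun p => fun i => if i = k + 1 then b - p.1 else p.2 i)
      ?_ ?_ ?_ ?_ ?_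
    · -- hi
      intro r hr
      rw [mem_Rfs] at hr
      obtain ⟨h0, h1, h2⟩ := hr
      have hb : PS r k + r (k + 1) = b := by rw [← PS_succ, h1]
      have hak := h2 k (by omega)
      refine Finset.mem_sigma.2 ⟨?_, ?_⟩
      · dsimp only
        exact Finset.mem_range.2 (by omega)
      rw [mem_Rfs]
      refine ⟨fun i hi => ?_, PS_if le_rfl, fun j hj => ?_⟩
      · dsimp only
        rcases eq_or_ne i (k + 1) with h | h
        · rw [if_pos h]
        · rw [if_neg h]; exact h0 i (by omega)
      · rw [PS_if (by omega)]; exact h2 j (by omega)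
    · -- hj
      rintro ⟨c, r'⟩ hp
      rw [Finset.mem_sigma, Finset.mem_range, mem_Rfs] at hp
      obtain ⟨hc, h0, h1, h2⟩ := hp
      dsimp only at hc h0 h1 h2 ⊢
      rw [mem_Rfs]
      refine ⟨fun i hi => ?_, ?_, fun j hj => ?_⟩
      · rw [if_neg (by omega)]; exact h0 i (by omega)
      · rw [PS_succ, PS_if le_rfl, h1]
        show c + (if k + 1 = k + 1 then b - c else r' (k + 1)) = b
        rw [if_pos rfl]
        omega
      · rw [PS_if (by omega)]
        rcases Nat.lt_or_ge j k with h | h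
        · exact h2 j h
        · have : j = k := by omega
          subst this
          rw [h1]; omega
    · -- left inverse
      intro r hr
      rw [mem_Rfs] at hr
      obtain ⟨h0, h1, h2⟩ := hr
      have hb : PS r k + r (k + 1) = b := by rw [← PS_succ, h1]
      funext i
      dsimp only
      rcases eq_or_ne i (k + 1) with h | h
      · rw [if_pos h, h]; omega
      · rw [if_neg h, if_neg h]
    · -- right inverse
      rintro ⟨c, r'⟩ hp
      rw [Finset.mem_sigma, Finset.mem_range, mem_Rfs] at hp
      obtain ⟨hc, h0, h1, h2⟩ := hp
      dsimp only at hc h0 h1 h2 ⊢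
      have hPS : PS (fun i => if i = k + 1 then b - c else r' i) k = c := by
        rw [PS_if le_rfl, h1]
      refine Sigma.ext hPS (heq_of_eq ?_)
      funext i
      dsimp only
      rcases eq_or_ne i (k + 1) with h | h
      · rw [if_pos h, h]
        exact (h0 (k + 1) (by omega)).symm
      · rw [if_neg h, if_neg h]
    · -- terms agree
      intro r hr
      rw [mem_Rfs] at hr
      obtain ⟨h0, h1, h2⟩ := hr
      have hb : PS r k + r (k + 1) = b := by rw [← PS_succ, h1]
      dsimp only
      set r' : ℕ → ℕ := fun i => if i = k + 1 then 0 else r i with hr'def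
      have hrk1 : r (k + 1) = b - PS r k := by omega
      have hr'eq : ∀ i, i ≤ k → r' i = r i := by
        intro i hi
        rw [hr'def]
        dsimp only
        rw [if_neg (by omega)]
      have hPS' : ∀ j, j ≤ k → PS r' j = PS r j := by
        intro j hj
        rw [hr'def, PS_if hj]
      have hE : E (k + 1) a r = E k a r' + (b - PS r k) * (a k - PS r k) := by
        rw [E, E, Finset.sum_Icc_succ_top (by omega : 1 ≤ k + 1)]
        congr 1
        · refine Finset.sum_congr rfl fun u hu => ?_
          simp only [Finset.mem_Icc] at hu
          rw [hr'eq u (by omega), hPS' (u - 1) (by omega)]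
        · rw [Nat.add_sub_cancel, hrk1]
      have hprod1 : ∏ i ∈ range (k + 1 + 1), Pq (r i) =
          (∏ i ∈ range (k + 1), Pq (r' i)) * Pq (b - PS r k) := by
        rw [Finset.prod_range_succ, hrk1]
        congr 1
        refine Finset.prod_congr rfl fun i hi => ?_
        simp only [Finset.mem_range] at hi
        rw [hr'eq i (by omega)]
      have hprod2 : ∏ j ∈ range (k + 1), Pq (a j - PS r j) =
          (∏ j ∈ range k, Pq (a j - PS r' j)) * Pq (a k - PS r k) := by
        rw [Finset.prod_range_succ]
        congr 1
        refine Finset.prod_congr rfl fun j hj => ?_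
        simp only [Finset.mem_range] at hj
        rw [hPS' j (by omega)]
      rw [hE, hprod1, hprod2, pow_add]
      ring
end KPAux

namespace KPAux
open Finset PowerSeries

lemma sum_Icc_pred {M : Type*} [AddCommMonoid M] (f : ℕ → M) (a b : ℕ) (ha : 1 ≤ a) :
    ∑ j ∈ Icc a (b + 1), f (j - 1) = ∑ j ∈ Icc (a - 1) b, f j := by
  refine Finset.sum_nbij' (i := fun x => x - 1) (j := fun x => x + 1) ?_ ?_ ?_ ?_ ?_
  · intro x hx; simp only [Finset.mem_Icc] at *; omega
  · intro x hx; simp only [Finset.mem_Icc] at *; omega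
  · intro x hx; simp only [Finset.mem_Icc] at hx; omega
  · intro x hx; simp only [Finset.mem_Icc] at hx; omega
  · intro x hx; rfl

lemma shrink {M : Type*} [AddCommMonoid M] {a n : ℕ} {f : ℕ → M} (h0 : f (n + 1) = 0)
    (h : a ≤ n + 1) : ∑ x ∈ Icc a (n + 1), f x = ∑ x ∈ Icc a n, f x := by
  rw [Finset.sum_Icc_succ_top h, h0, add_zero]

lemma codim_split (n : ℕ) (d : ℕ → ℕ) (r : ℕ → ℕ) (m' : ℕ → ℕ → ℕ)
    (h : ∀ k ≤ n, d k - PS r k = ∑ i ∈ range (k + 1), ∑ j ∈ Icc k n, m' i j) :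
    kpCodim (n + 1) (fun i j => if j = n + 1 then r i else m' i j) =
      kpCodim n m' + E (n + 1) d r := by
  set M : ℕ → ℕ → ℕ := fun i j => if j = n + 1 then r i else m' i j with hM
  have hMr : ∀ i, M i (n + 1) = r i := fun i => by simp [hM]
  have hMm : ∀ i j, j ≠ n + 1 → M i j = m' i j := by
    intro i j hj; rw [hM]; dsimp only; rw [if_neg hj]
  -- split innermost v-sum
  have hsplit : kpCodim (n + 1) M =
      (∑ i ∈ Icc 1 (n + 1), ∑ u ∈ Icc i (n + 1), ∑ j ∈ Icc u (n + 1),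
        ∑ v ∈ Icc j n, M (i - 1) (j - 1) * M u v) +
      (∑ i ∈ Icc 1 (n + 1), ∑ u ∈ Icc i (n + 1), ∑ j ∈ Icc u (n + 1),
        M (i - 1) (j - 1) * r u) := by
    rw [kpCodim, ← Finset.sum_add_distrib]
    refine Finset.sum_congr rfl fun i hi => ?_
    rw [← Finset.sum_add_distrib]
    refine Finset.sum_congr rfl fun u hu => ?_
    rw [← Finset.sum_add_distrib]
    refine Finset.sum_congr rfl fun j hj => ?_
    simp only [Finset.mem_Icc] at hi hu hj
    rw [Finset.sum_Icc_succ_top (by omega : j ≤ n + 1), hMr u]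
  rw [hsplit]
  congr 1
  · -- first part = kpCodim n m'
    rw [kpCodim]
    rw [shrink (n := n) (f := fun i => ∑ u ∈ Icc i (n + 1), ∑ j ∈ Icc u (n + 1),
        ∑ v ∈ Icc j n, M (i - 1) (j - 1) * M u v)
      (by simp [Finset.Icc_self, Finset.Icc_eq_empty_of_lt (by omega : n < n + 1)]) (by omega)]
    refine Finset.sum_congr rfl fun i hi => ?_
    simp only [Finset.mem_Icc] at hi
    rw [shrink (n := n) (f := fun u => ∑ j ∈ Icc u (n + 1), ∑ v ∈ Icc j n,
        M (i - 1) (j - 1) * M u v)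
      (by simp [Finset.Icc_self, Finset.Icc_eq_empty_of_lt (by omega : n < n + 1)]) (by omega)]
    refine Finset.sum_congr rfl fun u hu => ?_
    simp only [Finset.mem_Icc] at hu
    rw [shrink (n := n) (f := fun j => ∑ v ∈ Icc j n, M (i - 1) (j - 1) * M u v)
      (by simp [Finset.Icc_eq_empty_of_lt (by omega : n < n + 1)]) (by omega)]
    refine Finset.sum_congr rfl fun j hj => ?_
    simp only [Finset.mem_Icc] at hj
    refine Finset.sum_congr rfl fun v hv => ?_
    simp only [Finset.mem_Icc] at hv
    rw [hMm (i - 1) (j - 1) (by omega), hMm u v (by omega)]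
  · -- second part = E (n+1) d r
    have hswap : (∑ i ∈ Icc 1 (n + 1), ∑ u ∈ Icc i (n + 1), ∑ j ∈ Icc u (n + 1),
        M (i - 1) (j - 1) * r u) =
        ∑ u ∈ Icc 1 (n + 1), ∑ i ∈ Icc 1 u, ∑ j ∈ Icc u (n + 1),
          M (i - 1) (j - 1) * r u := by
      refine Finset.sum_comm' ?_
      intro x y
      simp only [Finset.mem_Icc]
      omega
    rw [hswap, E]
    refine Finset.sum_congr rfl fun u hu => ?_
    simp only [Finset.mem_Icc] at hu
    have inner : ∀ i ∈ Icc 1 u, ∑ j ∈ Icc u (n + 1), M (i - 1) (j - 1) * r u =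
        (∑ j ∈ Icc u (n + 1), m' (i - 1) (j - 1)) * r u := by
      intro i hi
      rw [Finset.sum_mul]
      refine Finset.sum_congr rfl fun j hj => ?_
      simp only [Finset.mem_Icc] at hj
      rw [hMm (i - 1) (j - 1) (by omega)]
    rw [Finset.sum_congr rfl inner, ← Finset.sum_mul]
    have key : ∑ i ∈ Icc 1 u, ∑ j ∈ Icc u (n + 1), m' (i - 1) (j - 1) =
        d (u - 1) - PS r (u - 1) := by
      have hre : ∀ i ∈ Icc 1 u, ∑ j ∈ Icc u (n + 1), m' (i - 1) (j - 1) =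
          ∑ j ∈ Icc (u - 1) n, m' (i - 1) j :=
        fun i _ => sum_Icc_pred (m' (i - 1)) u n (by omega)
      rw [Finset.sum_congr rfl hre]
      have h2 := sum_Icc_pred (fun i => ∑ j ∈ Icc (u - 1) n, m' i j) 1 (u - 1) le_rfl
      rw [show u - 1 + 1 = u from by omega] at h2
      rw [h2]
      have h3 : Icc 0 (u - 1) = range u := by
        ext x; simp only [Finset.mem_Icc, Finset.mem_range]; omega
      have h4 := h (u - 1) (by omega)
      rw [show u - 1 + 1 = u from by omega] at h4
      rw [h3, ← h4]
    rw [key]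
    ring

end KPAux

namespace KPAux
open Finset PowerSeries

lemma PqKP_split (n : ℕ) (r : ℕ → ℕ) (m' : ℕ → ℕ → ℕ) :
    PqKP (n + 1) (fun i j => if j = n + 1 then r i else m' i j) =
      (∏ i ∈ range (n + 2), Pq (r i)) * PqKP n m' := by
  set M : ℕ → ℕ → ℕ := fun i j => if j = n + 1 then r i else m' i j with hM
  have hMr : ∀ i, M i (n + 1) = r i := fun i => by simp [hM]
  have hMm : ∀ i j, j ≠ n + 1 → M i j = m' i j := by
    intro i j hj; rw [hM]; dsimp only; rw [if_neg hj]
  rw [PqKP]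
  have hrow : ∀ i ∈ range (n + 2),
      ∏ j ∈ Icc i (n + 1), Pq (M i j) =
        (∏ j ∈ Icc i n, Pq (m' i j)) * Pq (r i) := by
    intro i hi
    simp only [Finset.mem_range] at hi
    rw [Finset.prod_Icc_succ_top (by omega : i ≤ n + 1), hMr i]
    congr 1
    refine Finset.prod_congr rfl fun j hj => ?_
    simp only [Finset.mem_Icc] at hj
    rw [hMm i j (by omega)]
  rw [Finset.prod_congr rfl hrow, Finset.prod_mul_distrib, mul_comm]
  congr 1
  rw [PqKP, show n + 2 = (n + 1) + 1 from rfl, Finset.prod_range_succ]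
  rw [show Icc (n + 1) n = (∅ : Finset ℕ) from Finset.Icc_eq_empty_of_lt (by omega),
    Finset.prod_empty, mul_one]

lemma m_le_of {n : ℕ} {d : ℕ → ℕ} {m : ℕ → ℕ → ℕ} (hm : IsKostant n d m)
    {i j : ℕ} (hij : i ≤ j) (hj : j ≤ n) : m i j ≤ d i := by
  have h2 := hm.2 i (le_trans hij hj)
  calc m i j ≤ ∑ j' ∈ Icc i n, m i j' :=
        Finset.single_le_sum (fun _ _ => Nat.zero_le _) (Finset.mem_Icc.2 ⟨hij, hj⟩)
    _ ≤ ∑ i' ∈ range (i + 1), ∑ j' ∈ Icc i n, m i' j' :=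
        Finset.single_le_sum (f := fun i' => ∑ j' ∈ Icc i n, m i' j')
          (fun _ _ => Nat.zero_le _) (Finset.mem_range.2 (by omega))
    _ = d i := (h2).symm

lemma KFin (n : ℕ) (d : ℕ → ℕ) : {m : ℕ → ℕ → ℕ | IsKostant n d m}.Finite := by
  set B := ∑ i ∈ range (n + 1), d i with hB
  have hdB : ∀ i ≤ n, d i ≤ B := fun i hi =>
    Finset.single_le_sum (f := d) (fun _ _ => Nat.zero_le _) (Finset.mem_range.2 (by omega))
  have hmB : ∀ m ∈ {m : ℕ → ℕ → ℕ | IsKostant n d m}, ∀ i j, m i j ≤ B := by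
    intro m hm i j
    rcases Classical.em (i ≤ j ∧ j ≤ n) with h | h
    · exact le_trans (m_le_of hm h.1 h.2) (hdB i (by omega))
    · rw [hm.1 i j h]; exact Nat.zero_le _
  have himg : Set.Finite ((fun (m : ℕ → ℕ → ℕ) (p : Fin (n + 1) × Fin (n + 1)) =>
      (⟨min (m p.1 p.2) B, by omega⟩ : Fin (B + 1))) '' {m | IsKostant n d m}) :=
    Set.toFinite _
  refine Set.Finite.of_finite_image himg ?_
  intro m hm m' hm' hEq
  funext i j
  rcases Classical.em (i ≤ n ∧ j ≤ n) with h | h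
  · have := congrFun hEq (⟨i, by omega⟩, ⟨j, by omega⟩)
    have h1 : min (m i j) B = min (m' i j) B := congrArg Fin.val this
    rw [min_eq_left (hmB m hm i j), min_eq_left (hmB m' hm' i j)] at h1
    exact h1
  · have hnot : ¬(i ≤ j ∧ j ≤ n) := by omega
    rw [hm.1 i j hnot, hm'.1 i j hnot]

noncomputable def Kfs (n : ℕ) (d : ℕ → ℕ) : Finset (ℕ → ℕ → ℕ) := (KFin n d).toFinset

lemma mem_Kfs {n : ℕ} {d : ℕ → ℕ} {m : ℕ → ℕ → ℕ} : m ∈ Kfs n d ↔ IsKostant n d m :=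
  (KFin n d).mem_toFinset

end KPAux

namespace KPAux
open Finset PowerSeries

lemma main (n : ℕ) (d : ℕ → ℕ) :
    ∏ i ∈ range (n + 1), Pq (d i) =
      ∑ m ∈ Kfs n d, (X : PowerSeries ℚ) ^ (kpCodim n m) * PqKP n m := by
  induction n generalizing d with
  | zero =>
    have hsingle : Kfs 0 d = {fun i j => if i = 0 ∧ j = 0 then d 0 else 0} := by
      ext m
      rw [mem_Kfs, Finset.mem_singleton]
      constructor
      · rintro ⟨h0, h1⟩
        have hd := h1 0 le_rfl
        simp only [Finset.Icc_self, Finset.sum_singleton, zero_add,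
          Finset.sum_range_one] at hd
        funext i j
        rcases Classical.em (i = 0 ∧ j = 0) with h | h
        · obtain ⟨rfl, rfl⟩ := h
          rw [if_pos ⟨rfl, rfl⟩, hd]
        · rw [if_neg h, h0 i j (by omega)]
      · rintro rfl
        constructor
        · intro i j hij
          dsimp only
          rw [if_neg (by omega)]
        · intro k hk
          interval_cases k
          simp
    rw [hsingle, Finset.sum_singleton]
    have hc : kpCodim 0 (fun i j => if i = 0 ∧ j = 0 then d 0 else 0) = 0 := by
      rw [kpCodim]
      simp
    have hp : PqKP 0 (fun i j => if i = 0 ∧ j = 0 then d 0 else 0) = Pq (d 0) := by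
      rw [PqKP]
      simp
    rw [hc, hp, pow_zero, one_mul, Finset.prod_range_one]
  | succ n ih =>
    have step1 : ∏ i ∈ range (n + 1 + 1), Pq (d i) = G (n + 1) d (d (n + 1)) := by
      rw [G_eq, Finset.prod_range_succ]; ring
    rw [step1, ← main2 (n + 1) d (d (n + 1))]
    have step2 : ∀ r ∈ Rfs (n + 1) d (d (n + 1)),
        (X : PowerSeries ℚ) ^ (E (n + 1) d r) *
          ((∏ i ∈ range (n + 1 + 1), Pq (r i)) * ∏ j ∈ range (n + 1), Pq (d j - PS r j)) =
        ∑ m' ∈ Kfs n (fun k => d k - PS r k),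
          (X : PowerSeries ℚ) ^ (E (n + 1) d r) *
            ((∏ i ∈ range (n + 1 + 1), Pq (r i)) *
              ((X : PowerSeries ℚ) ^ (kpCodim n m') * PqKP n m')) := by
      intro r _
      have hih := ih (fun k => d k - PS r k)
      rw [hih]
      simp only [Finset.mul_sum]
    rw [Finset.sum_congr rfl step2, Finset.sum_sigma']
    refine Finset.sum_nbij'
      (i := fun p => fun i j => if j = n + 1 then p.1 i else p.2 i j)
      (j := fun m => (⟨fun i => m i (n + 1), fun i j => if j = n + 1 then 0 else m i j⟩ :
        (_ : ℕ → ℕ) × (ℕ → ℕ → ℕ)))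
      ?_ ?_ ?_ ?_ ?_
    · -- bwd lands in Kfs (n+1) d
      rintro ⟨r, m'⟩ hp
      rw [Finset.mem_sigma, mem_Rfs, mem_Kfs] at hp
      obtain ⟨⟨hr0, hr1, hr2⟩, hm0, hm1⟩ := hp
      dsimp only at hr0 hr1 hr2 hm0 hm1 ⊢
      rw [mem_Kfs]
      constructor
      · intro i j hij
        dsimp only
        rcases eq_or_ne j (n + 1) with h | h
        · rw [if_pos h]; exact hr0 i (by omega)
        · rw [if_neg h]; exact hm0 i j (by omega)
      · intro k hk
        rcases Nat.lt_or_ge k (n + 1) with hkn | hkn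
        · have hrow : ∀ i ∈ range (k + 1),
              ∑ j ∈ Icc k (n + 1), (if j = n + 1 then r i else m' i j) =
              (∑ j ∈ Icc k n, m' i j) + r i := by
            intro i _
            rw [Finset.sum_Icc_succ_top (by omega : k ≤ n + 1), if_pos rfl]
            congr 1
            refine Finset.sum_congr rfl fun j hj => ?_
            simp only [Finset.mem_Icc] at hj
            rw [if_neg (by omega)]
          rw [Finset.sum_congr rfl hrow, Finset.sum_add_distrib]
          have h1 := hm1 k (by omega)
          have h2 : ∑ i ∈ range (k + 1), r i = PS r k := rfl
          have h3 := hr2 k hkn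
          omega
        · have hkeq : k = n + 1 := by omega
          subst hkeq
          have hrow : ∀ i ∈ range (n + 1 + 1),
              ∑ j ∈ Icc (n + 1) (n + 1), (if j = n + 1 then r i else m' i j) = r i := by
            intro i _
            rw [Finset.Icc_self, Finset.sum_singleton, if_pos rfl]
          rw [Finset.sum_congr rfl hrow]
          exact hr1.symm
    · -- fwd lands in sigma
      intro m hm
      rw [mem_Kfs] at hm
      obtain ⟨h0, h1⟩ := hm
      rw [Finset.mem_sigma]
      constructor
      · dsimp only
        rw [mem_Rfs]
        refine ⟨fun i hi => h0 i (n + 1) (by omega), ?_, ?_⟩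
        · have hd := h1 (n + 1) le_rfl
          simp only [Finset.Icc_self, Finset.sum_singleton] at hd
          exact hd.symm
        · intro j hj
          have hd := h1 j (by omega)
          rw [hd]
          refine Finset.sum_le_sum fun i _ => ?_
          exact Finset.single_le_sum (f := fun j' => m i j') (fun _ _ => Nat.zero_le _)
            (Finset.mem_Icc.2 ⟨by omega, le_rfl⟩)
      · dsimp only
        rw [mem_Kfs]
        constructor
        · intro i j hij
          dsimp only
          rcases eq_or_ne j (n + 1) with h | h
          · rw [if_pos h]
          · rw [if_neg h]; exact h0 i j (by omega)
        · intro k hk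
          have hd := h1 k (by omega)
          have hrow : ∀ i ∈ range (k + 1),
              ∑ j ∈ Icc k (n + 1), m i j =
              (∑ j ∈ Icc k n, (if j = n + 1 then 0 else m i j)) + m i (n + 1) := by
            intro i _
            rw [Finset.sum_Icc_succ_top (by omega : k ≤ n + 1)]
            congr 1
            refine Finset.sum_congr rfl fun j hj => ?_
            simp only [Finset.mem_Icc] at hj
            rw [if_neg (by omega)]
          rw [Finset.sum_congr rfl hrow, Finset.sum_add_distrib] at hd
          have h2 : ∑ i ∈ range (k + 1), m i (n + 1) = PS (fun i => m i (n + 1)) k := rfl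
          dsimp only
          omega
    · -- left inverse : fwd (bwd p) = p
      rintro ⟨r, m'⟩ hp
      rw [Finset.mem_sigma, mem_Rfs, mem_Kfs] at hp
      obtain ⟨⟨hr0, hr1, hr2⟩, hm0, hm1⟩ := hp
      dsimp only
      refine Sigma.ext ?_ (heq_of_eq ?_)
      · dsimp only
        funext i
        rw [if_pos rfl]
      · dsimp only
        funext i j
        rcases eq_or_ne j (n + 1) with h | h
        · rw [if_pos h, h]
          exact (hm0 i (n + 1) (by omega)).symm
        · rw [if_neg h, if_neg h]
    · -- right inverse : bwd (fwd m) = m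
      intro m hm
      rw [mem_Kfs] at hm
      obtain ⟨h0, h1⟩ := hm
      dsimp only
      funext i j
      rcases eq_or_ne j (n + 1) with h | h
      · rw [if_pos h, h]
      · rw [if_neg h, if_neg h]
    · -- terms agree
      rintro ⟨r, m'⟩ hp
      rw [Finset.mem_sigma, mem_Rfs, mem_Kfs] at hp
      obtain ⟨⟨hr0, hr1, hr2⟩, hm0, hm1⟩ := hp
      dsimp only
      have hcodim := codim_split n d r m' (by
        intro k hk
        have := hm1 k hk
        dsimp only at this
        exact this)
      have hprod := PqKP_split n r m'
      rw [hcodim, hprod, pow_add]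
      ring

end KPAux

/-- The identity `P_d = Σ_{m ⊢ d} q^{c(m)} P_m` in `ℚ⟦q⟧`. -/
theorem stmt4 (N : ℕ) (hN : 1 ≤ N) (d : ℕ → ℕ) :
    ∏ i ∈ Finset.range (N + 1), Pq (d i) =
      ∑ᶠ m ∈ {m : ℕ → ℕ → ℕ | IsKostant N d m},
        (PowerSeries.X : PowerSeries ℚ) ^ kpCodim N m * PqKP N m := by
  rw [← Set.Finite.coe_toFinset (KPAux.KFin N d), finsum_mem_coe_finset]
  exact KPAux.main N d
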